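/- arXiv:2104.11758 — 3 statements merged into one kernel-verified Lean document; each statement's English description precedes it below -/
import Mathlib

section
/- Let T be an observation table and (≡,f) a merging map on T of minimal size among all merging maps on T, and let M be the transducer resulting from (≡,f). Then M is compatible with T. -/
attribute [local instance] Classical.propDecidable

/-- A subsequential string transducer with input alphabet `σ` and output alphabet `γ`. -/
structure Transducer (σ : Type) (γ : Type) : Type 1 where
  Q : Type
  fin : Finite Q
  q0 : Q
  w0 : List γ
  δ : Q → σ → Option (Q × List γ)
  δF : Q → Option (List γ)

namespace Transducer

variable {σ γ : Type}

/-- The run relation `q →*^{u|w} q'`, as a function: from state `q`, reading `u`,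
we reach the returned state producing the returned (concatenated) output. -/
def runFrom (M : Transducer σ γ) : M.Q → List σ → Option (M.Q × List γ)
  | q, [] => some (q, [])
  | q, a :: u =>
    (M.δ q a).bind fun x =>
      (M.runFrom x.1 u).map fun y => (y.1, x.2 ++ y.2)

/-- The semantics `⟦M⟧` of a transducer, as a partial function `Σ* → Γ*`. -/
def sem (M : Transducer σ γ) (u : List σ) : Option (List γ) :=
  (M.runFrom M.q0 u).bind fun x => (M.δF x.1).map fun w' => M.w0 ++ x.2 ++ w'

/-- The number of states `|M|` of a transducer. -/
noncomputable def size (M : Transducer σ γ) : ℕ := Nat.card M.Q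

/-- The run of `v` in `M` (from the initial state) uses the transition out of
state `q` reading letter `a`. -/
def usesTransition (M : Transducer σ γ) (q : M.Q) (a : σ) (v : List σ) : Prop :=
  ∃ (vp vs : List σ) (w : List γ), v = vp ++ a :: vs ∧ M.runFrom M.q0 vp = some (q, w)

/-- Modify the transition function of `M` at `(q, a)`: replace it by `o`
(`o = none` deletes the transition, `o = some (q', w)` makes it `q →^{a|w} q'`). -/
noncomputable def modifyDelta (M : Transducer σ γ) (q : M.Q) (a : σ)
    (o : Option (M.Q × List γ)) : Transducer σ γ :=
  { M with δ := fun p b => if p = q ∧ b = a then o else M.δ p b }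

/-- The product transducer `M × A` of a transducer and a DFA. -/
noncomputable def prodDFA {Q : Type} [Finite Q] (M : Transducer σ γ) (A : DFA σ Q) :
    Transducer σ γ where
  Q := M.Q × Q
  fin := by have := M.fin; infer_instance
  q0 := (M.q0, A.start)
  w0 := M.w0
  δ := fun qp a => (M.δ qp.1 a).map fun x => ((x.1, A.step qp.2 a), x.2)
  δF := fun qp => if qp.2 ∈ A.accept then M.δF qp.1 else none

end Transducer

/-- A table entry: a word of `Γ*`, the wildcard `#`, or `⊥`. -/
inductive TVal (γ : Type) : Type where
  | word : List γ → TVal γ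
  | hash : TVal γ
  | bot  : TVal γ

/-- An observation table for a target partial function `τ` with regular domain
upper bound `Up`, based on a finite prefix-closed set `P` and a finite
suffix-closed set `S` (both containing `ε`). -/
structure ObsTable (σ γ : Type) where
  P : Finset (List σ)
  S : Finset (List σ)
  eps_mem_P : ([] : List σ) ∈ P
  eps_mem_S : ([] : List σ) ∈ S
  prefixClosed : ∀ u ∈ P, ∀ v : List σ, v <+: u → v ∈ P
  suffixClosed : ∀ u ∈ S, ∀ v : List σ, v <:+ u → v ∈ S
  Up : Language σ
  regular : ∃ (n : ℕ) (A : DFA σ (Fin n)), A.accepts = Up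
  τ : List σ → Option (List γ)
  dom_subset : ∀ u : List σ, (τ u).isSome → u ∈ Up

namespace ObsTable

variable {σ γ : Type}

/-- The set `P ∪ PΣ`. -/
def rowIdx (T : ObsTable σ γ) : Set (List σ) :=
  ↑T.P ∪ {x | ∃ p ∈ T.P, ∃ a : σ, x = p ++ [a]}

/-- The set `(P ∪ PΣ)·S` on which the table is defined. -/
def rows (T : ObsTable σ γ) : Set (List σ) :=
  {x | ∃ u ∈ T.rowIdx, ∃ v ∈ T.S, x = u ++ v}

/-- The table entry at `x`: `#` if `x ∉ Up`, `⊥` if `x ∈ Up ∖ dom τ`, and `τ x` otherwise. -/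
noncomputable def val (T : ObsTable σ γ) (x : List σ) : TVal γ :=
  if x ∈ T.Up then
    match T.τ x with
    | some w => TVal.word w
    | none => TVal.bot
  else TVal.hash

/-- `P_T`: the set of prefixes of elements of `(P ∪ PΣ)·S`. -/
def PT (T : ObsTable σ γ) : Set (List σ) := {u | ∃ x ∈ T.rows, u <+: x}

/-- `P_Γ`: those `u ∈ P_T` having an extension whose table entry is a word of `Γ*`. -/
def PGamma (T : ObsTable σ γ) : Set (List σ) :=
  {u | u ∈ T.PT ∧ ∃ v : List σ, u ++ v ∈ T.rows ∧ ∃ w, T.val (u ++ v) = TVal.word w}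

/-- A transducer `M` is compatible with the table `T`. -/
def Compatible (T : ObsTable σ γ) (M : Transducer σ γ) : Prop :=
  ∀ x ∈ T.rows,
    (∀ w, T.val x = TVal.word w → M.sem x = some w) ∧
    (T.val x = TVal.bot → M.sem x = none)

lemma rowIdx_finite [Finite σ] (T : ObsTable σ γ) : T.rowIdx.Finite := by
  refine Set.Finite.union T.P.finite_toSet ?_
  have h : {x : List σ | ∃ p ∈ T.P, ∃ a : σ, x = p ++ [a]}
      ⊆ (fun pa : List σ × σ => pa.1 ++ [pa.2]) '' ((↑T.P : Set (List σ)) ×ˢ (Set.univ : Set σ)) := by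
    rintro x ⟨p, hp, a, rfl⟩
    exact ⟨(p, a), ⟨hp, trivial⟩, rfl⟩
  exact ((T.P.finite_toSet.prod Set.finite_univ).image _).subset h

lemma rows_finite [Finite σ] (T : ObsTable σ γ) : T.rows.Finite := by
  have h : T.rows ⊆ (fun uv : List σ × List σ => uv.1 ++ uv.2) '' (T.rowIdx ×ˢ (↑T.S : Set (List σ))) := by
    rintro x ⟨u, hu, v, hv, rfl⟩
    exact ⟨(u, v), ⟨hu, hv⟩, rfl⟩
  exact (((rowIdx_finite T).prod T.S.finite_toSet).image _).subset h

lemma PT_finite [Finite σ] (T : ObsTable σ γ) : T.PT.Finite := by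
  have h : T.PT ⊆ ⋃ x ∈ T.rows, {u : List σ | u ∈ x.inits} := by
    rintro u ⟨x, hx, hpre⟩
    exact Set.mem_biUnion hx (by simpa [List.mem_inits] using hpre)
  refine (Set.Finite.biUnion (rows_finite T) fun x _ => ?_).subset h
  exact x.inits.finite_toSet

end ObsTable

/-- A merging map `(≡, f)` on an observation table `T`. -/
structure MergingMap {σ γ : Type} (T : ObsTable σ γ) where
  rel : List σ → List σ → Prop
  f : List σ → Option (List γ)
  rel_mem : ∀ u v : List σ, rel u v → u ∈ T.PT ∧ v ∈ T.PT
  rel_refl : ∀ u ∈ T.PT, rel u u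
  rel_symm : ∀ {u v : List σ}, rel u v → rel v u
  rel_trans : ∀ {u v w : List σ}, rel u v → rel v w → rel u w
  f_mem : ∀ u : List σ, (f u).isSome → u ∈ T.PT
  cond1 : ∀ u v : List σ, f u = none → rel u v → f v = none
  cond2 : ∀ (u v : List σ) (w : List γ), u ∈ T.PT → u ++ v ∈ T.rows →
    T.val (u ++ v) = TVal.word w → ∃ x, f u = some x ∧ x <+: w
  cond3 : ∀ (u : List σ) (a : σ) (w : List γ), f (u ++ [a]) = some w →
    ∃ x, f u = some x ∧ x <+: w
  cond4 : ∀ (u u' : List σ) (a : σ) (wu : List γ), f u = some wu → rel u u' →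
    u ++ [a] ∈ T.PT → u' ++ [a] ∈ T.PT →
    rel (u ++ [a]) (u' ++ [a]) ∧
    ∀ wua, f (u ++ [a]) = some wua →
      ∃ (wu' x : List γ), f u' = some wu' ∧ wua = wu ++ x ∧ f (u' ++ [a]) = some (wu' ++ x)
  cond5 : ∀ (u u' : List σ) (w : List γ), u ∈ T.rows → T.val u = TVal.word w → rel u u' →
    (u' ∈ T.rows → T.val u' ≠ TVal.bot) ∧
    ∀ w', u' ∈ T.rows → T.val u' = TVal.word w' →
      ∃ (x fu fu' : List γ), f u = some fu ∧ f u' = some fu' ∧ w = fu ++ x ∧ w' = fu' ++ x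
  cond6 : ∀ (u : List σ) (a : σ), (f (u ++ [a])).isSome →
    (¬ ∃ v, rel u v ∧ v ++ [a] ∈ T.PGamma) → f (u ++ [a]) = f u

namespace MergingMap

variable {σ γ : Type} {T : ObsTable σ γ}

/-- The `≡`-class of `u`. -/
def cls (m : MergingMap T) (u : List σ) : Set (List σ) := {v | m.rel u v}

/-- The set of `≡`-classes meeting `dom f`. -/
def classes (m : MergingMap T) : Set (Set (List σ)) :=
  {C | ∃ u : List σ, (m.f u).isSome ∧ C = m.cls u}

/-- The size of a merging map: the number of `≡`-classes meeting `dom f`. -/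
noncomputable def size (m : MergingMap T) : ℕ := m.classes.ncard

lemma cls_mem_classes (m : MergingMap T) {u : List σ} (h : (m.f u).isSome) :
    m.cls u ∈ m.classes := ⟨u, h, rfl⟩

lemma classes_finite [Finite σ] (m : MergingMap T) : m.classes.Finite := by
  have h : m.classes ⊆ m.cls '' T.PT := by
    rintro C ⟨u, hu, rfl⟩
    exact ⟨u, m.f_mem u hu, rfl⟩
  exact ((T.PT_finite).image _).subset h

/-- A muted pair `(u, a)` of a merging map. -/
def Muted (m : MergingMap T) (u : List σ) (a : σ) : Prop :=
  (m.f u).isSome ∧ (m.f (u ++ [a])).isSome ∧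
    ¬ ∃ v, m.rel u v ∧ v ++ [a] ∈ T.PGamma

/-- An open end `(u, a)` of a merging map. -/
def OpenEnd (m : MergingMap T) (u : List σ) (a : σ) : Prop :=
  u ∈ T.PT ∧ ¬ ∃ v, m.rel u v ∧ v ++ [a] ∈ T.PT

/-- The transducer resulting from a merging map (assuming `f ε` is defined,
so that the initial state exists). -/
noncomputable def resulting [Finite σ] (m : MergingMap T) (h0 : (m.f []).isSome) :
    Transducer σ γ where
  Q := {C : Set (List σ) // C ∈ m.classes}
  fin := m.classes_finite.to_subtype
  q0 := ⟨m.cls [], m.cls_mem_classes h0⟩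
  w0 := (m.f []).get h0
  δ := fun q a =>
    if h : ∃ u : List σ, (m.f u).isSome ∧ (m.f (u ++ [a])).isSome ∧ q.1 = m.cls u then
      some (⟨m.cls (h.choose ++ [a]), m.cls_mem_classes h.choose_spec.2.1⟩,
        ((m.f (h.choose ++ [a])).get h.choose_spec.2.1).drop
          ((m.f h.choose).get h.choose_spec.1).length)
    else none
  δF := fun q =>
    if h : ∃ u : List σ, (m.f u).isSome ∧ q.1 = m.cls u ∧ u ∈ T.rows ∧
        ∃ w, T.val u = TVal.word w then
      some (h.choose_spec.2.2.2.choose.drop ((m.f h.choose).get h.choose_spec.1).length)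
    else none

/-- The state `q_u` of the resulting transducer associated with `u ∈ dom f`. -/
noncomputable def state [Finite σ] (m : MergingMap T) (h0 : (m.f []).isSome)
    {u : List σ} (h : (m.f u).isSome) : (m.resulting h0).Q :=
  ⟨m.cls u, m.cls_mem_classes h⟩

/-- An open completion of a merging map, determined by a choice `g` of added
transitions (which, when used, must only be added at open ends, with output `ε`). -/
noncomputable def openCompletion [Finite σ] (m : MergingMap T) (h0 : (m.f []).isSome)
    (g : (m.resulting h0).Q → σ → Option ((m.resulting h0).Q)) : Transducer σ γ :=
  { m.resulting h0 with
    δ := fun q a =>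
      match (m.resulting h0).δ q a with
      | some x => some x
      | none => (g q a).map fun q' => (q', ([] : List γ)) }

/-- The choice `g` of added transitions only adds transitions at open ends. -/
def ValidOpenChoice [Finite σ] (m : MergingMap T) (h0 : (m.f []).isSome)
    (g : (m.resulting h0).Q → σ → Option ((m.resulting h0).Q)) : Prop :=
  ∀ (q : (m.resulting h0).Q) (a : σ), (g q a).isSome →
    ∃ u : List σ, q.1 = m.cls u ∧ m.OpenEnd u a

/-- The run of `x` in the open completion uses a muted or an open transition. -/
def usesMutedOrOpen [Finite σ] (m : MergingMap T) (h0 : (m.f []).isSome)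
    (g : (m.resulting h0).Q → σ → Option ((m.resulting h0).Q)) (x : List σ) : Prop :=
  ∃ (vp : List σ) (a : σ) (vs : List σ) (q : (m.resulting h0).Q) (w : List γ),
    x = vp ++ a :: vs ∧
    (m.openCompletion h0 g).runFrom (m.openCompletion h0 g).q0 vp = some (q, w) ∧
    ((∃ u, q.1 = m.cls u ∧ m.Muted u a) ∨ (m.resulting h0).δ q a = none)

lemma resulting_δF_some [Finite σ] (m : MergingMap T) (h0 : (m.f []).isSome)
    {u : List σ} (hmem : m.cls u ∈ m.classes)
    (hcond : ∃ u' : List σ, (m.f u').isSome ∧ m.cls u = m.cls u' ∧ u' ∈ T.rows ∧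
      ∃ w, T.val u' = TVal.word w) :
    ∃ (u' : List σ) (wu' w' : List γ), m.f u' = some wu' ∧ m.cls u = m.cls u' ∧
      u' ∈ T.rows ∧ T.val u' = TVal.word w' ∧
      (m.resulting h0).δF ⟨m.cls u, hmem⟩ = some (w'.drop wu'.length) := by
  refine ⟨hcond.choose, (m.f hcond.choose).get hcond.choose_spec.1,
    hcond.choose_spec.2.2.2.choose, (Option.some_get _).symm,
    hcond.choose_spec.2.1, hcond.choose_spec.2.2.1,
    hcond.choose_spec.2.2.2.choose_spec, ?_⟩
  simp only [MergingMap.resulting]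
  rw [dif_pos hcond]

lemma resulting_δF_none [Finite σ] (m : MergingMap T) (h0 : (m.f []).isSome)
    {u : List σ} (hmem : m.cls u ∈ m.classes)
    (hcond : ¬ ∃ u' : List σ, (m.f u').isSome ∧ m.cls u = m.cls u' ∧ u' ∈ T.rows ∧
      ∃ w, T.val u' = TVal.word w) :
    (m.resulting h0).δF ⟨m.cls u, hmem⟩ = none := by
  simp only [MergingMap.resulting]
  rw [dif_neg hcond]

end MergingMap

/-- The equivalence on `P_T` induced by a transducer: two words are related when
they reach the same state of `M` (or both fail to have a run). -/
def inducedRel {σ γ : Type} (M : Transducer σ γ) (T : ObsTable σ γ) (u v : List σ) : Prop :=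
  u ∈ T.PT ∧ v ∈ T.PT ∧
    (M.runFrom M.q0 u).map Prod.fst = (M.runFrom M.q0 v).map Prod.fst

/-- Helper for the induced partial output function: walk through the word,
appending the transition output only when the step leads into `P_Γ` for
some equivalent word. -/
noncomputable def goF {σ γ : Type} (M : Transducer σ γ) (T : ObsTable σ γ) :
    M.Q → List γ → List σ → Option (List γ)
  | _, acc, [] => some acc
  | q, acc, a :: rest =>
    (M.δ q a).bind fun x =>
      goF M T x.1
        (if ∃ v ∈ T.PT, (M.runFrom M.q0 v).map Prod.fst = some q ∧ v ++ [a] ∈ T.PGamma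
          then acc ++ x.2 else acc) rest

/-- The partial output function induced by a transducer on `P_T`. -/
noncomputable def inducedF {σ γ : Type} (M : Transducer σ γ) (T : ObsTable σ γ)
    (u : List σ) : Option (List γ) :=
  if u ∈ T.PT then goF M T M.q0 M.w0 u else none


namespace Transducer

variable {σ γ : Type}

lemma runFrom_append (M : Transducer σ γ) (q : M.Q) (u v : List σ) :
    M.runFrom q (u ++ v) = (M.runFrom q u).bind fun x =>
      (M.runFrom x.1 v).map fun y => (y.1, x.2 ++ y.2) := by
  induction u generalizing q with
  | nil =>
    simp only [List.nil_append, runFrom, Option.bind_some]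
    cases M.runFrom q v <;> simp
  | cons a u ih =>
    simp only [List.cons_append, runFrom, ih]
    cases hd : M.δ q a with
    | none => simp
    | some x =>
      simp only [Option.bind_some]
      cases hr : M.runFrom x.1 u with
      | none => simp [ih, hr]
      | some y =>
        simp only [Option.map_some, Option.bind_some]
        cases hr2 : M.runFrom y.1 v <;> simp [ih, hr, hr2, List.append_assoc]

lemma runFrom_single (M : Transducer σ γ) (q : M.Q) (a : σ) :
    M.runFrom q [a] = M.δ q a := by
  simp only [runFrom]
  cases M.δ q a <;> simp [runFrom]

end Transducer

namespace ObsTable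

variable {σ γ : Type}

lemma PT_prefix_closed (T : ObsTable σ γ) {u v : List σ} (hu : u ∈ T.PT)
    (hv : v <+: u) : v ∈ T.PT := by
  obtain ⟨x, hx, h⟩ := hu
  exact ⟨x, hx, hv.trans h⟩

lemma rows_subset_PT (T : ObsTable σ γ) {u : List σ} (hu : u ∈ T.rows) : u ∈ T.PT :=
  ⟨u, hu, List.prefix_refl u⟩

end ObsTable

namespace MergingMap

variable {σ γ : Type} {T : ObsTable σ γ}

lemma cls_eq_of_rel (m : MergingMap T) {u v : List σ} (h : m.rel u v) :
    m.cls u = m.cls v := by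
  ext w
  constructor
  · exact fun hw => m.rel_trans (m.rel_symm h) hw
  · exact fun hw => m.rel_trans h hw

lemma rel_of_cls_eq (m : MergingMap T) {u u' : List σ} (h : (m.f u').isSome)
    (hc : m.cls u = m.cls u') : m.rel u u' := by
  have hm : u' ∈ m.cls u' := m.rel_refl u' (m.f_mem u' h)
  rw [← hc] at hm
  exact hm

lemma run_f [Finite σ] (m : MergingMap T) (h0 : (m.f []).isSome) {u : List σ} {w : List γ}
    (hf : m.f u = some w) :
    (m.f []).get h0 <+: w ∧
    (m.resulting h0).runFrom (m.resulting h0).q0 u =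
      some (⟨m.cls u, m.cls_mem_classes (Option.isSome_iff_exists.mpr ⟨w, hf⟩)⟩,
        w.drop ((m.f []).get h0).length) := by
  induction u using List.reverseRecOn generalizing w with
  | nil =>
    have hw : (m.f []).get h0 = w := by simp [hf]
    constructor
    · exact hw ▸ List.prefix_refl _
    · simp only [Transducer.runFrom, MergingMap.resulting, hw, List.drop_length]
  | append_singleton u a ih =>
    obtain ⟨x, hfu, hxw⟩ := m.cond3 u a w hf
    obtain ⟨hpre, hrun⟩ := ih hfu
    have hfua : (m.f (u ++ [a])).isSome := Option.isSome_iff_exists.mpr ⟨w, hf⟩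
    have hPT1 : u ++ [a] ∈ T.PT := m.f_mem _ hfua
    constructor
    · exact hpre.trans hxw
    rw [Transducer.runFrom_append, hrun]
    rw [Option.bind_some]
    rw [Transducer.runFrom_single]
    show Option.map _ ((m.resulting h0).δ
        ⟨m.cls u, m.cls_mem_classes (Option.isSome_iff_exists.mpr ⟨x, hfu⟩)⟩ a) = _
    simp only [MergingMap.resulting]
    have hcond : ∃ u' : List σ, (m.f u').isSome ∧ (m.f (u' ++ [a])).isSome ∧
        m.cls u = m.cls u' :=
      ⟨u, Option.isSome_iff_exists.mpr ⟨x, hfu⟩, hfua, rfl⟩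
    rw [dif_pos hcond]
    set u' := hcond.choose with hu'
    obtain ⟨hfu', hfu'a, hclseq⟩ := hcond.choose_spec
    have hrel : m.rel u u' := m.rel_of_cls_eq hfu' hclseq
    have hPT2 : u' ++ [a] ∈ T.PT := m.f_mem _ hfu'a
    obtain ⟨hrel2, hspec4⟩ := m.cond4 u u' a x hfu hrel hPT1 hPT2
    obtain ⟨wu', xtail, hfu'eq, hweq, hfu'aeq⟩ := hspec4 w hf
    have hstate : m.cls (u' ++ [a]) = m.cls (u ++ [a]) :=
      m.cls_eq_of_rel (m.rel_symm hrel2)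
    have hget1 : (m.f (u' ++ [a])).get hfu'a = wu' ++ xtail := by
      simp [hfu'aeq]
    have hget2 : (m.f u').get hfu' = wu' := by simp [hfu'eq]
    obtain ⟨t, ht⟩ := hpre
    have hdropx : x.drop ((m.f []).get h0).length = t := by
      rw [← ht, List.drop_left]
    have hdropw : w.drop ((m.f []).get h0).length = t ++ xtail := by
      rw [hweq, ← ht, List.append_assoc, List.drop_left]
    simp only [Option.map_some]
    congr 1
    refine Prod.ext ?_ ?_
    · exact Subtype.ext hstate
    · show x.drop ((m.f []).get h0).length ++
        ((m.f (u' ++ [a])).get hfu'a).drop ((m.f u').get hfu').length = _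
      rw [hget1, hget2, List.drop_left, hdropx, hdropw]

lemma run_some_f [Finite σ] (m : MergingMap T) (h0 : (m.f []).isSome) {u : List σ}
    (hu : u ∈ T.PT)
    (h : ((m.resulting h0).runFrom (m.resulting h0).q0 u).isSome) :
    (m.f u).isSome := by
  induction u using List.reverseRecOn with
  | nil => exact h0
  | append_singleton u a ih =>
    have huPT : u ∈ T.PT := T.PT_prefix_closed hu ⟨[a], rfl⟩
    rw [Transducer.runFrom_append] at h
    cases hrun : (m.resulting h0).runFrom (m.resulting h0).q0 u with
    | none => rw [hrun] at h; simp at h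
    | some p =>
      have hfu : (m.f u).isSome := ih huPT (by rw [hrun]; rfl)
      obtain ⟨x, hfux⟩ := Option.isSome_iff_exists.mp hfu
      obtain ⟨-, hrun2⟩ := m.run_f h0 hfux
      rw [hrun2] at h
      rw [Option.bind_some, Transducer.runFrom_single] at h
      by_cases hcond : ∃ u' : List σ, (m.f u').isSome ∧ (m.f (u' ++ [a])).isSome ∧
          m.cls u = m.cls u'
      · obtain ⟨u', hfu', hfu'a, hclseq⟩ := hcond
        have hrel : m.rel u u' := m.rel_of_cls_eq hfu' hclseq
        have hPT2 : u' ++ [a] ∈ T.PT := m.f_mem _ hfu'a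
        obtain ⟨wu', hwu'⟩ := Option.isSome_iff_exists.mp hfu'
        obtain ⟨wu'a, hwu'a⟩ := Option.isSome_iff_exists.mp hfu'a
        obtain ⟨-, hspec4⟩ := m.cond4 u' u a wu' hwu' (m.rel_symm hrel) hPT2 hu
        obtain ⟨wu, xtail, -, -, hfaeq⟩ := hspec4 wu'a hwu'a
        exact Option.isSome_iff_exists.mpr ⟨wu ++ xtail, hfaeq⟩
      · exfalso
        have hδ : (m.resulting h0).δ
            ⟨m.cls u, m.cls_mem_classes (Option.isSome_iff_exists.mpr ⟨x, hfux⟩)⟩ a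
            = none := by
          show (if h : ∃ u' : List σ, (m.f u').isSome ∧ (m.f (u' ++ [a])).isSome ∧
              m.cls u = m.cls u' then _ else none) = none
          rw [dif_neg hcond]
        rw [hδ] at h
        simp at h

end MergingMap

/-- The transducer resulting from a merging map of minimal size is
compatible with the table. -/
theorem resulting_compatible_of_minimal {σ γ : Type} [Finite σ] [Finite γ]
    (T : ObsTable σ γ) (m : MergingMap T)
    (hmin : ∀ m' : MergingMap T, m.size ≤ m'.size)
    (h0 : (m.f []).isSome) :
    T.Compatible (m.resulting h0) := by
  intro x hx
  have hxPT : x ∈ T.PT := T.rows_subset_PT hx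
  constructor
  · intro w hw
    obtain ⟨fx, hfx, hfxw⟩ := m.cond2 x [] w hxPT (by simpa using hx) (by simpa using hw)
    have hfxsome : (m.f x).isSome := Option.isSome_iff_exists.mpr ⟨fx, hfx⟩
    obtain ⟨hpre, hrun⟩ := m.run_f h0 hfx
    have hcond : ∃ u' : List σ, (m.f u').isSome ∧ m.cls x = m.cls u' ∧ u' ∈ T.rows ∧
        ∃ w', T.val u' = TVal.word w' := ⟨x, hfxsome, rfl, hx, w, hw⟩
    obtain ⟨u', wu', w'', hfu'eq, hclseq, hu'rows, hvalw'', hδFeq⟩ :=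
      m.resulting_δF_some h0 (m.cls_mem_classes hfxsome) hcond
    rw [Transducer.sem, hrun, Option.bind_some, hδFeq, Option.map_some]
    have hrel : m.rel x u' := m.rel_of_cls_eq (Option.isSome_iff_exists.mpr ⟨wu', hfu'eq⟩) hclseq
    obtain ⟨-, hspec5⟩ := m.cond5 x u' w hx hw hrel
    obtain ⟨x0, fu, fu', hfueq, hfu'eq2, hweq, hw''eq⟩ := hspec5 w'' hu'rows hvalw''
    have hfufx : fu = fx := by rw [hfx] at hfueq; injection hfueq.symm
    have hfu'wu' : fu' = wu' := by rw [hfu'eq] at hfu'eq2; injection hfu'eq2.symm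
    have hw0 : (m.resulting h0).w0 = (m.f []).get h0 := rfl
    obtain ⟨t, ht⟩ := hpre
    have hdropfx : fx.drop ((m.f []).get h0).length = t := by rw [← ht, List.drop_left]
    have hdropw'' : w''.drop wu'.length = x0 := by
      rw [hw''eq, hfu'wu', List.drop_left]
    show some ((m.f []).get h0 ++ fx.drop ((m.f []).get h0).length ++
      w''.drop wu'.length) = some w
    rw [hdropfx, hdropw'', hweq, hfufx, ← ht, List.append_assoc]
  · intro hw
    cases hrun : (m.resulting h0).runFrom (m.resulting h0).q0 x with
    | none => simp [Transducer.sem, hrun]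
    | some p =>
      have hfx : (m.f x).isSome := m.run_some_f h0 hxPT (by rw [hrun]; rfl)
      obtain ⟨fx, hfxeq⟩ := Option.isSome_iff_exists.mp hfx
      obtain ⟨-, hrun2⟩ := m.run_f h0 hfxeq
      have hδF : (m.resulting h0).δF
          ⟨m.cls x, m.cls_mem_classes hfx⟩ = none := by
        refine m.resulting_δF_none h0 _ ?_
        rintro ⟨u', hfu', hclseq, hu'rows, w', hvalw'⟩
        have hrel : m.rel x u' := m.rel_of_cls_eq hfu' hclseq
        obtain ⟨hnb, -⟩ := m.cond5 u' x w' hu'rows hvalw' (m.rel_symm hrel)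
        exact hnb hx hw
      rw [Transducer.sem, hrun2, Option.bind_some, hδF, Option.map_none]
end

section
/- Let T be an observation table and M a transducer compatible with T. Then the pair (≡,f) induced by M on P_T satisfies all six conditions of a merging map, i.e., the induced pair is a merging map on T. -/
attribute [local instance] Classical.propDecidable

section Helpers

variable {σ γ : Type} (M : Transducer σ γ) (T : ObsTable σ γ)

lemma runFrom_append (q : M.Q) (u v : List σ) :
    M.runFrom q (u ++ v) = (M.runFrom q u).bind fun x =>
      (M.runFrom x.1 v).map fun y => (y.1, x.2 ++ y.2) := by
  induction u generalizing q with
  | nil => simp [Transducer.runFrom]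
  | cons a u ih =>
    simp only [List.cons_append, Transducer.runFrom, List.append_eq]
    cases M.δ q a with
    | none => simp
    | some x =>
      simp only [Option.bind_some, ih x.1]
      cases M.runFrom x.1 u with
      | none => simp
      | some y =>
        simp only [Option.bind_some, Option.map_some]
        cases M.runFrom y.1 v <;> simp

lemma goF_isSome (q : M.Q) (acc : List γ) (u : List σ) :
    (goF M T q acc u).isSome ↔ (M.runFrom q u).isSome := by
  induction u generalizing q acc with
  | nil => simp [goF, Transducer.runFrom]
  | cons a u ih =>
    simp only [goF, Transducer.runFrom]
    cases M.δ q a with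
    | none => simp
    | some x => simp [ih]

lemma goF_append (q : M.Q) (acc : List γ) (u v : List σ) :
    goF M T q acc (u ++ v) = (M.runFrom q u).bind fun x =>
      (goF M T q acc u).bind fun w => goF M T x.1 w v := by
  induction u generalizing q acc with
  | nil => simp [goF, Transducer.runFrom]
  | cons a u ih =>
    simp only [List.cons_append, goF, Transducer.runFrom, List.append_eq]
    cases M.δ q a with
    | none => simp
    | some x =>
      simp only [Option.bind_some]
      rw [ih]
      cases M.runFrom x.1 u <;> simp

lemma PT_prefix_closed {u x : List σ} (hpre : u <+: x) (hx : x ∈ T.PT) : u ∈ T.PT := by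
  obtain ⟨y, hy, hxy⟩ := hx
  exact ⟨y, hy, hpre.trans hxy⟩

lemma rows_subset_PT {u : List σ} (hu : u ∈ T.rows) : u ∈ T.PT :=
  ⟨u, hu, List.prefix_refl u⟩

lemma goF_full (u : List σ) : ∀ (u0 : List σ) (q : M.Q) (w0' acc : List γ),
    M.runFrom M.q0 u0 = some (q, w0') →
    (∀ p a rest, u = p ++ a :: rest → (u0 ++ p) ∈ T.PT ∧ (u0 ++ p ++ [a]) ∈ T.PGamma) →
    goF M T q acc u = (M.runFrom q u).map fun x => acc ++ x.2 := by
  induction u with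
  | nil => intros; simp [goF, Transducer.runFrom]
  | cons a u ih =>
    intro u0 q w0' acc hrun hsel
    obtain ⟨hpt, hpg⟩ := hsel [] a u rfl
    simp only [goF, Transducer.runFrom]
    have hcond : ∃ v ∈ T.PT,
        (M.runFrom M.q0 v).map Prod.fst = some q ∧ v ++ [a] ∈ T.PGamma := by
      refine ⟨u0, by simpa using hpt, by simp [hrun], by simpa using hpg⟩
    cases hδ : M.δ q a with
    | none => simp
    | some x =>
      simp only [Option.bind_some]
      rw [if_pos hcond]
      have hrun' : M.runFrom M.q0 (u0 ++ [a]) = some (x.1, w0' ++ x.2) := by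
        rw [runFrom_append]; simp [hrun, Transducer.runFrom, hδ]
      rw [ih (u0 ++ [a]) x.1 (w0' ++ x.2) (acc ++ x.2) hrun' ?_]
      · cases M.runFrom x.1 u <;> simp
      · intro p b rest hsplit
        have := hsel (a :: p) b rest (by simp [hsplit])
        constructor
        · have h1 := this.1; simpa [List.append_assoc] using h1
        · have h2 := this.2; simpa [List.append_assoc] using h2

/-- `f u` when `u` has an extension in the rows with a word value. -/
lemma inducedF_full {u v : List σ} {w : List γ} (hu : u ∈ T.PT)
    (hrow : u ++ v ∈ T.rows) (hval : T.val (u ++ v) = TVal.word w)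
    {x : M.Q × List γ} (hrun : M.runFrom M.q0 u = some x) :
    inducedF M T u = some (M.w0 ++ x.2) := by
  have hfull := goF_full M T u [] M.q0 [] M.w0 (by simp [Transducer.runFrom]) ?_
  · unfold inducedF
    rw [if_pos hu, hfull, hrun]
    simp
  · intro p a rest hsplit
    simp only [List.nil_append]
    subst hsplit
    have hpre1 : p <+: (p ++ a :: rest) ++ v := ⟨a :: rest ++ v, by simp⟩
    have hpre2 : p ++ [a] <+: (p ++ a :: rest) ++ v := ⟨rest ++ v, by simp⟩
    refine ⟨by simpa using PT_prefix_closed T hpre1 (rows_subset_PT T hrow), ?_⟩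
    refine ⟨PT_prefix_closed T (by simpa using hpre2) (rows_subset_PT T hrow),
      rest ++ v, ?_, w, ?_⟩
    · simpa [List.append_assoc] using hrow
    · have : p ++ [a] ++ (rest ++ v) = (p ++ a :: rest) ++ v := by simp
      rw [this]; exact hval

lemma sem_decomp {u : List σ} {w : List γ} (h : M.sem u = some w) :
    ∃ (x : M.Q × List γ) (fw : List γ), M.runFrom M.q0 u = some x ∧
      M.δF x.1 = some fw ∧ w = M.w0 ++ x.2 ++ fw := by
  unfold Transducer.sem at h
  cases hr : M.runFrom M.q0 u with
  | none => rw [hr] at h; simp at h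
  | some x =>
    rw [hr] at h
    simp only [Option.bind_some] at h
    cases hf : M.δF x.1 with
    | none => rw [hf] at h; simp at h
    | some fw =>
      rw [hf] at h
      simp only [Option.map_some, Option.some_inj] at h
      exact ⟨x, fw, rfl, hf, h.symm⟩

lemma inducedF_isSome (u : List σ) :
    (inducedF M T u).isSome ↔ u ∈ T.PT ∧ (M.runFrom M.q0 u).isSome := by
  by_cases h : u ∈ T.PT
  · rw [inducedF, if_pos h, goF_isSome]; simp [h]
  · rw [inducedF, if_neg h]; simp [h]

end Helpers

/-- The pair `(≡, f)` induced on `P_T` by a transducer compatible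
with `T` satisfies all six conditions of a merging map, i.e., it is a merging
map on `T`. -/
theorem induced_is_mergingMap {σ γ : Type} [Finite σ] [Finite γ]
    (T : ObsTable σ γ) (M : Transducer σ γ) (hM : T.Compatible M) :
    ∃ m : MergingMap T, m.rel = inducedRel M T ∧ m.f = inducedF M T := by
  refine ⟨{ rel := inducedRel M T, f := inducedF M T
            rel_mem := by rintro u v ⟨hu, hv, -⟩; exact ⟨hu, hv⟩
            rel_refl := fun u hu => ⟨hu, hu, rfl⟩
            rel_symm := by rintro u v ⟨hu, hv, h⟩; exact ⟨hv, hu, h.symm⟩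
            rel_trans := by rintro u v w ⟨hu, hv, h1⟩ ⟨-, hw, h2⟩; exact ⟨hu, hw, h1.trans h2⟩
            f_mem := fun u h => ((inducedF_isSome M T u).1 h).1
            cond1 := ?_, cond2 := ?_, cond3 := ?_, cond4 := ?_, cond5 := ?_,
            cond6 := ?_ }, rfl, rfl⟩
  · -- cond1
    rintro u v hnone ⟨hu, hv, heq⟩
    have h2 : M.runFrom M.q0 u = none := by
      cases h : M.runFrom M.q0 u with
      | none => rfl
      | some x =>
        have := (inducedF_isSome M T u).2 ⟨hu, by simp [h]⟩
        rw [hnone] at this; simp at this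
    rw [h2] at heq
    have h3 : M.runFrom M.q0 v = none := by
      cases h : M.runFrom M.q0 v with
      | none => rfl
      | some x => rw [h] at heq; simp at heq
    cases h4 : inducedF M T v with
    | none => rfl
    | some w =>
      have := (inducedF_isSome M T v).1 (by simp [h4])
      rw [h3] at this; simp at this
  · -- cond2
    intro u v w hu hrow hval
    have hsem := (hM _ hrow).1 w hval
    obtain ⟨x, fw, hrun, hfin, hw⟩ := sem_decomp M hsem
    rw [runFrom_append] at hrun
    cases hy : M.runFrom M.q0 u with
    | none => rw [hy] at hrun; simp at hrun
    | some y =>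
      rw [hy] at hrun
      simp only [Option.bind_some] at hrun
      cases hz : M.runFrom y.1 v with
      | none => rw [hz] at hrun; simp at hrun
      | some z =>
        rw [hz] at hrun
        simp only [Option.map_some, Option.some_inj] at hrun
        refine ⟨M.w0 ++ y.2, inducedF_full M T hu hrow hval hy, z.2 ++ fw, ?_⟩
        rw [hw, ← hrun]
        simp
  · -- cond3
    intro u a w hfa
    have hmem : u ++ [a] ∈ T.PT := ((inducedF_isSome M T _).1 (by simp [hfa])).1
    have huPT : u ∈ T.PT := PT_prefix_closed T ⟨[a], rfl⟩ hmem
    unfold inducedF at hfa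
    rw [if_pos hmem, goF_append] at hfa
    cases hx : M.runFrom M.q0 u with
    | none => rw [hx] at hfa; simp at hfa
    | some x =>
      rw [hx] at hfa
      simp only [Option.bind_some] at hfa
      cases hg : goF M T M.q0 M.w0 u with
      | none => rw [hg] at hfa; simp at hfa
      | some fu =>
        rw [hg] at hfa
        simp only [Option.bind_some, goF] at hfa
        cases hδ : M.δ x.1 a with
        | none => rw [hδ] at hfa; simp at hfa
        | some t =>
          rw [hδ] at hfa
          simp only [Option.bind_some, Option.some_inj] at hfa
          refine ⟨fu, ?_, ?_⟩
          · unfold inducedF; rw [if_pos huPT]; exact hg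
          · rw [← hfa]
            split
            · exact ⟨t.2, rfl⟩
            · exact List.prefix_refl fu
  · -- cond4
    rintro u u' a wu hfu ⟨hu, hu', heq⟩ hua hu'a
    have hfu' := hfu
    unfold inducedF at hfu'
    rw [if_pos hu] at hfu'
    have hxs : (M.runFrom M.q0 u).isSome := by
      rw [← goF_isSome M T M.q0 M.w0 u]; simp [hfu']
    obtain ⟨x, hx⟩ := Option.isSome_iff_exists.mp hxs
    have hx' : ∃ x', M.runFrom M.q0 u' = some x' ∧ x'.1 = x.1 := by
      rw [hx] at heq
      cases h : M.runFrom M.q0 u' with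
      | none => rw [h] at heq; simp at heq
      | some x' =>
        rw [h] at heq; simp only [Option.map_some, Option.some_inj] at heq
        exact ⟨x', rfl, heq.symm⟩
    obtain ⟨x', hx', hq⟩ := hx'
    constructor
    · refine ⟨hua, hu'a, ?_⟩
      rw [runFrom_append, runFrom_append, hx, hx']
      simp only [Option.bind_some, Transducer.runFrom]
      rw [hq]
      cases M.δ x.1 a <;> simp [Transducer.runFrom]
    · intro wua hfua
      unfold inducedF at hfua
      rw [if_pos hua, goF_append, hx] at hfua
      simp only [Option.bind_some] at hfua
      rw [hfu'] at hfua
      simp only [Option.bind_some, goF] at hfua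
      cases hδ : M.δ x.1 a with
      | none => rw [hδ] at hfua; simp at hfua
      | some t =>
        rw [hδ] at hfua
        simp only [Option.bind_some, Option.some_inj] at hfua
        have hws : (goF M T M.q0 M.w0 u').isSome := by
          rw [goF_isSome]; simp [hx']
        obtain ⟨wu', hwu'⟩ := Option.isSome_iff_exists.mp hws
        by_cases hc : ∃ v ∈ T.PT,
            (M.runFrom M.q0 v).map Prod.fst = some x.1 ∧ v ++ [a] ∈ T.PGamma
        · refine ⟨wu', t.2, ?_, ?_, ?_⟩
          · unfold inducedF; rw [if_pos hu']; exact hwu'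
          · rw [← hfua, if_pos hc]
          · unfold inducedF
            rw [if_pos hu'a, goF_append, hx']
            simp only [Option.bind_some]
            rw [hwu']
            simp only [Option.bind_some, goF]
            rw [hq, hδ]
            simp only [Option.bind_some, if_pos hc, goF]
        · refine ⟨wu', [], ?_, ?_, ?_⟩
          · unfold inducedF; rw [if_pos hu']; exact hwu'
          · rw [← hfua, if_neg hc]; simp
          · unfold inducedF
            rw [if_pos hu'a, goF_append, hx']
            simp only [Option.bind_some]
            rw [hwu']
            simp only [Option.bind_some, goF]
            rw [hq, hδ]
            simp only [Option.bind_some, if_neg hc, goF]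
            simp
  · -- cond5
    rintro u u' w hurow hval ⟨hu, hu', heq⟩
    have hsem := (hM _ hurow).1 w hval
    obtain ⟨x, fw, hrun, hfin, hw⟩ := sem_decomp M hsem
    have hx' : ∃ x', M.runFrom M.q0 u' = some x' ∧ x'.1 = x.1 := by
      rw [hrun] at heq
      cases h : M.runFrom M.q0 u' with
      | none => rw [h] at heq; simp at heq
      | some x' =>
        rw [h] at heq; simp only [Option.map_some, Option.some_inj] at heq
        exact ⟨x', rfl, heq.symm⟩
    obtain ⟨x', hx', hq⟩ := hx'
    have hsem' : M.sem u' = some (M.w0 ++ x'.2 ++ fw) := by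
      unfold Transducer.sem
      rw [hx']
      simp only [Option.bind_some]
      rw [hq, hfin]
      simp
    constructor
    · intro hu'row hbot
      have := (hM _ hu'row).2 hbot
      rw [hsem'] at this
      cases this
    · intro w' hu'row hval'
      have hsem'' := (hM _ hu'row).1 w' hval'
      have hw' : w' = M.w0 ++ x'.2 ++ fw := by
        rw [hsem''] at hsem'; exact Option.some_inj.mp hsem'
      have h1 : u ++ [] ∈ T.rows := by simpa using hurow
      have h2 : T.val (u ++ []) = TVal.word w := by simpa using hval
      have h1' : u' ++ [] ∈ T.rows := by simpa using hu'row
      have h2' : T.val (u' ++ []) = TVal.word w' := by simpa using hval'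
      refine ⟨fw, M.w0 ++ x.2, M.w0 ++ x'.2,
        inducedF_full M T hu h1 h2 hrun, inducedF_full M T hu' h1' h2' hx', ?_, ?_⟩
      · simp [hw]
      · simp [hw']
  · -- cond6
    intro u a hsome hnex
    have hua : u ++ [a] ∈ T.PT := ((inducedF_isSome M T _).1 hsome).1
    have hu : u ∈ T.PT := PT_prefix_closed T ⟨[a], rfl⟩ hua
    have hrs : (M.runFrom M.q0 (u ++ [a])).isSome := ((inducedF_isSome M T _).1 hsome).2
    rw [runFrom_append] at hrs
    cases hx : M.runFrom M.q0 u with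
    | none => rw [hx] at hrs; simp at hrs
    | some x =>
      rw [hx] at hrs
      simp only [Option.bind_some, Option.isSome_map] at hrs
      have hfs : (goF M T M.q0 M.w0 u).isSome := by
        rw [goF_isSome]; simp [hx]
      obtain ⟨fu, hfu⟩ := Option.isSome_iff_exists.mp hfs
      have hδ : ∃ t, M.δ x.1 a = some t := by
        cases h : M.δ x.1 a with
        | none =>
          rw [Transducer.runFrom] at hrs
          rw [h] at hrs
          simp [Transducer.runFrom] at hrs
        | some t => exact ⟨t, rfl⟩
      obtain ⟨t, hδ⟩ := hδ
      have hc : ¬ ∃ v ∈ T.PT,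
          (M.runFrom M.q0 v).map Prod.fst = some x.1 ∧ v ++ [a] ∈ T.PGamma := by
        rintro ⟨v, hvPT, hveq, hvPG⟩
        exact hnex ⟨v, ⟨hu, hvPT, by rw [hx]; exact hveq.symm⟩, hvPG⟩
      unfold inducedF
      rw [if_pos hua, if_pos hu, goF_append, hx]
      simp only [Option.bind_some]
      rw [hfu]
      simp only [Option.bind_some, goF]
      rw [hδ]
      simp only [Option.bind_some, if_neg hc, goF]
end

section
/- Let T be an observation table, (≡,f) a merging map on T, M its resulting transducer, and (u,a) a muted pair of (≡,f). Then for every v∈P_T with T(v)∈Γ*, the run of v in M from the initial state q_ε does not use the transition q_u→^{a|ε}q_{ua}; that is, writing v=v_pref·a·v_suf with v_pref reaching the state q_u is impossible. -/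
attribute [local instance] Classical.propDecidable

lemma ObsTable.PT_prefix_closed_s5 {σ γ : Type} {T : ObsTable σ γ} {x y : List σ}
    (h : x ∈ T.PT) (hp : y <+: x) : y ∈ T.PT := by
  obtain ⟨z, hz, hzx⟩ := h
  exact ⟨z, hz, hp.trans hzx⟩

lemma MergingMap.rel_of_cls_eq_s5 {σ γ : Type} {T : ObsTable σ γ} (m : MergingMap T)
    {u c : List σ} (h : m.cls u = m.cls c) (hc : c ∈ T.PT) : m.rel u c := by
  have : c ∈ m.cls c := m.rel_refl c hc
  rw [← h] at this
  exact this

lemma MergingMap.run_inv {σ γ : Type} [Finite σ] {T : ObsTable σ γ}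
    (m : MergingMap T) (h0 : (m.f []).isSome) :
    ∀ (vp p : List σ), p ++ vp ∈ T.PT →
      ∀ (q : (m.resulting h0).Q) (c : List σ),
        (m.f c).isSome → m.rel c p → q.1 = m.cls c →
        ∀ (q' : (m.resulting h0).Q) (w' : List γ),
          (m.resulting h0).runFrom q vp = some (q', w') →
          ∃ c', (m.f c').isSome ∧ m.rel c' (p ++ vp) ∧ q'.1 = m.cls c' := by
  intro vp
  induction vp with
  | nil =>
    intro p hPT q c hc hrel hq q' w' hrun
    simp [Transducer.runFrom] at hrun
    exact ⟨c, hc, by simpa using hrel, hrun.1 ▸ hq⟩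
  | cons b rest ih =>
    intro p hPT q c hc hrel hq q' w' hrun
    rw [Transducer.runFrom] at hrun
    by_cases hcond : ∃ u : List σ, (m.f u).isSome ∧ (m.f (u ++ [b])).isSome ∧ q.1 = m.cls u
    · have hδ : (m.resulting h0).δ q b =
          some (⟨m.cls (hcond.choose ++ [b]), m.cls_mem_classes hcond.choose_spec.2.1⟩,
            ((m.f (hcond.choose ++ [b])).get hcond.choose_spec.2.1).drop
              ((m.f hcond.choose).get hcond.choose_spec.1).length) := by
        show (if h : _ then _ else _) = _
        exact dif_pos hcond
      rw [hδ] at hrun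
      rw [Option.bind_some] at hrun
      rw [Option.map_eq_some_iff] at hrun
      obtain ⟨y, hy, hyq⟩ := hrun
      set u₀ := hcond.choose with hu₀
      obtain ⟨hfu₀, hfu₀b, hqu₀⟩ := hcond.choose_spec
      -- rel u₀ p
      have hcPT : c ∈ T.PT := (m.rel_mem c p hrel).1
      have hrelu₀c : m.rel u₀ c := m.rel_of_cls_eq_s5 (by rw [← hqu₀, hq]) hcPT
      have hrelu₀p : m.rel u₀ p := m.rel_trans hrelu₀c hrel
      have hpbPT : p ++ [b] ∈ T.PT :=
        ObsTable.PT_prefix_closed_s5 hPT ⟨rest, by simp⟩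
      have hu₀bPT : u₀ ++ [b] ∈ T.PT := m.f_mem _ hfu₀b
      have hrelstep : m.rel (u₀ ++ [b]) (p ++ [b]) :=
        (m.cond4 u₀ p b ((m.f u₀).get hfu₀) (by simp) hrelu₀p hu₀bPT hpbPT).1
      have hPT' : (p ++ [b]) ++ rest ∈ T.PT := by simpa using hPT
      obtain ⟨c', hc', hrelc', hqc'⟩ :=
        ih (p ++ [b]) hPT' _ (u₀ ++ [b]) hfu₀b hrelstep rfl y.1 y.2 (by simpa using hy)
      refine ⟨c', hc', by simpa using hrelc', ?_⟩
      have : q' = y.1 := by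
        have := congrArg Prod.fst hyq
        simpa using this.symm
      rw [this]; exact hqc'
    · have hδ : (m.resulting h0).δ q b = none := by
        show (if h : _ then _ else _) = _
        exact dif_neg hcond
      rw [hδ] at hrun
      simp at hrun

/-- A muted transition `q_u →^{a|ε} q_{ua}` is never used by the
run of any `v ∈ P_T` with `T(v) ∈ Γ*`: no decomposition `v = v_pref · a · v_suf`
with `v_pref` reaching the state `q_u` is possible. -/
theorem muted_transition_not_used {σ γ : Type} [Finite σ] [Finite γ]
    (T : ObsTable σ γ) (m : MergingMap T) (h0 : (m.f []).isSome)
    (u : List σ) (a : σ) (hma : m.Muted u a)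
    (v : List σ) (hvPT : v ∈ T.PT) (hvrow : v ∈ T.rows)
    (w : List γ) (hvw : T.val v = TVal.word w) :
    ∀ (vp vs : List σ), v = vp ++ a :: vs →
      ∀ (q : (m.resulting h0).Q) (wq : List γ),
        (m.resulting h0).runFrom (m.resulting h0).q0 vp = some (q, wq) →
        q.1 ≠ m.cls u := by
  intro vp vs hv q wq hrun hqu
  -- prefixes of v are in PT
  have hvpPT : vp ++ [] ∈ T.PT := by
    simpa using ObsTable.PT_prefix_closed_s5 hvPT ⟨a :: vs, hv.symm⟩
  have hvpaPT : vp ++ [a] ∈ T.PT :=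
    ObsTable.PT_prefix_closed_s5 hvPT ⟨vs, by simpa using hv.symm⟩
  have hepsPT : ([] : List σ) ∈ T.PT := by
    obtain ⟨x, hx, _⟩ := hvPT
    exact ⟨x, hx, List.nil_prefix⟩
  obtain ⟨c', hc', hrelc', hqc'⟩ :=
    m.run_inv h0 vp [] (by simpa using hvpPT) (m.resulting h0).q0 [] h0
      (m.rel_refl [] hepsPT) rfl q wq hrun
  have hrelc'vp : m.rel c' vp := by simpa using hrelc'
  -- rel u vp
  have hc'PT : c' ∈ T.PT := (m.rel_mem c' vp hrelc').1
  have hreluc' : m.rel u c' := m.rel_of_cls_eq_s5 (by rw [← hqu, hqc']) hc'PT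
  have hreluvp : m.rel u vp := m.rel_trans hreluc' hrelc'vp
  -- vp ++ [a] ∈ PGamma
  have hPG : vp ++ [a] ∈ T.PGamma := by
    refine ⟨hvpaPT, vs, ?_, w, ?_⟩
    · rw [List.append_assoc]; simpa using hv ▸ hvrow
    · rw [List.append_assoc]; simpa using hv ▸ hvw
  exact hma.2.2 ⟨vp, hreluvp, hPG⟩
end
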